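/- arXiv:2405.02651 — 10 statements merged into one kernel-verified Lean document; each statement's English description precedes it below -/
import Mathlib

section
/- Let N ≥ 8 and let a, b, j be integers with 0 ≤ a ≤ b ≤ N, ⌊j²/4⌋ < N, and a + b ≠ j. If N(N−j) ≤ (N−a)(N−b) ≤ (N−⌊j/2⌋)(N−⌈j/2⌉), then a + b = j + 1, and moreover N ≤ ab ≤ N + (3/2)√N and N(N−j) ≤ (N−a)(N−b) ≤ N(N−j) + (3/2)√N. -/
set_option maxHeartbeats 1600000 in
theorem short_interval_part2 (N a b j : ℤ) (hN : 8 ≤ N)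
    (ha : 0 ≤ a) (hab : a ≤ b) (hbN : b ≤ N)
    (hj : ⌊(j : ℚ) ^ 2 / 4⌋ < N) (hsum : a + b ≠ j)
    (h1 : N * (N - j) ≤ (N - a) * (N - b))
    (h2 : (N - a) * (N - b) ≤ (N - ⌊(j : ℚ) / 2⌋) * (N - ⌈(j : ℚ) / 2⌉)) :
    a + b = j + 1 ∧
    ((N : ℝ) ≤ (a * b : ℤ) ∧ ((a * b : ℤ) : ℝ) ≤ N + 3 / 2 * Real.sqrt N) ∧
    (((N * (N - j) : ℤ) : ℝ) ≤ ((N - a) * (N - b) : ℤ) ∧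
      (((N - a) * (N - b) : ℤ) : ℝ) ≤ ((N * (N - j) : ℤ) : ℝ) + 3 / 2 * Real.sqrt N) := by
  have hq12 : ⌊(j : ℚ) / 2⌋ + ⌈(j : ℚ) / 2⌉ = j ∧
      ⌊(j : ℚ) / 2⌋ * ⌈(j : ℚ) / 2⌉ = ⌊(j : ℚ) ^ 2 / 4⌋ ∧
      4 * ⌊(j : ℚ) ^ 2 / 4⌋ ≤ j ^ 2 ∧ j ^ 2 ≤ 4 * ⌊(j : ℚ) ^ 2 / 4⌋ + 1 := by
    rcases Int.even_or_odd j with ⟨k, hk⟩ | ⟨k, hk⟩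
    · subst hk
      have e1 : ((k + k : ℤ) : ℚ) / 2 = ((k : ℤ) : ℚ) := by push_cast; ring
      have e2 : ((k + k : ℤ) : ℚ) ^ 2 / 4 = ((k ^ 2 : ℤ) : ℚ) := by push_cast; ring
      rw [e1, e2, Int.floor_intCast, Int.ceil_intCast, Int.floor_intCast]
      refine ⟨by ring, by ring, by nlinarith, by nlinarith⟩
    · subst hk
      have hf : ⌊((2 * k + 1 : ℤ) : ℚ) / 2⌋ = k := by
        rw [Int.floor_eq_iff]
        constructor
        · push_cast; linarith
        · push_cast; linarith
      have hc : ⌈((2 * k + 1 : ℤ) : ℚ) / 2⌉ = k + 1 := by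
        rw [Int.ceil_eq_iff]
        constructor
        · push_cast; linarith
        · push_cast; linarith
      have hf2 : ⌊((2 * k + 1 : ℤ) : ℚ) ^ 2 / 4⌋ = k ^ 2 + k := by
        rw [Int.floor_eq_iff]
        constructor
        · push_cast; nlinarith
        · push_cast; nlinarith
      rw [hf, hc, hf2]
      refine ⟨by ring, by ring, by nlinarith, by nlinarith⟩
  obtain ⟨hq, hF, hF1, hF2⟩ := hq12
  set q1 := ⌊(j : ℚ) / 2⌋ with hq1def
  set q2 := ⌈(j : ℚ) / 2⌉ with hq2def
  set F := ⌊(j : ℚ) ^ 2 / 4⌋ with hFdef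
  have e2 : (N - q1) * (N - q2) = N ^ 2 - j * N + F := by
    rw [← hq, ← hF]; ring
  rw [e2] at h2
  have hFN : F ≤ N - 1 := by omega
  have hab0 : 0 ≤ a * b := mul_nonneg ha (le_trans ha hab)
  have hAM : 4 * (a * b) ≤ (a + b) ^ 2 := by nlinarith [sq_nonneg (a - b)]
  have h2' : a * b ≤ (a + b - j) * N + F := by nlinarith [h2]
  have h1' : (a + b - j) * N ≤ a * b := by nlinarith [h1]
  have hb0 : 0 ≤ b := le_trans ha hab
  have ht : a + b - j = 1 := by
    by_contra hne
    rcases (by omega : a + b - j ≤ -1 ∨ 2 ≤ a + b - j) with h | h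
    · nlinarith
    · have hs2N : a + b ≤ 2 * N := by linarith
      have htj : a + b - j ≤ j := by
        nlinarith [mul_nonneg (by linarith : (0:ℤ) ≤ 2 * N - (a + b)) (by linarith : (0:ℤ) ≤ a + b)]
      have hA : 4 * ((a + b - j) * N) ≤ (a + b) ^ 2 := by linarith
      have hj2 : j ^ 2 ≤ 4 * N - 3 := by omega
      have hsq : (a + b) ^ 2 ≤ 4 * j ^ 2 := by
        nlinarith [mul_nonneg (by linarith : (0:ℤ) ≤ 2 * j - (a + b))
          (by linarith : (0:ℤ) ≤ 2 * j + (a + b))]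
      have htN : (a + b - j) * N ≤ 4 * N - 3 := by linarith
      have ht3 : a + b - j ≤ 3 := by nlinarith [htN]
      rcases (by omega : a + b - j = 2 ∨ a + b - j = 3) with h' | h'
      · obtain hs : a + b = j + 2 := by omega
        rw [hs] at hA
        have hj7 : N - 1 ≤ j := by nlinarith [hA, hj2]
        have hsq : (N - 1) * (N - 1) ≤ j ^ 2 := by
          nlinarith [mul_nonneg (by linarith : (0:ℤ) ≤ j - (N - 1))
            (by linarith : (0:ℤ) ≤ j + (N - 1))]
        nlinarith [hsq, hj2, mul_nonneg (by linarith : (0:ℤ) ≤ N - 8) (by linarith : (0:ℤ) ≤ N)]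
      · obtain hs : a + b = j + 3 := by omega
        rw [hs] at hA
        have hj7 : N - 1 ≤ j := by nlinarith [hA, hj2]
        have hsq : (N - 1) * (N - 1) ≤ j ^ 2 := by
          nlinarith [mul_nonneg (by linarith : (0:ℤ) ≤ j - (N - 1))
            (by linarith : (0:ℤ) ≤ j + (N - 1))]
        nlinarith [hsq, hj2, mul_nonneg (by linarith : (0:ℤ) ≤ N - 8) (by linarith : (0:ℤ) ≤ N)]
  have hsumj : a + b = j + 1 := by omega
  have hpl : N ≤ a * b := by nlinarith [h1']
  have hpu4 : 4 * (a * b) ≤ (j + 1) ^ 2 := by rw [← hsumj]; exact hAM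
  have hj2 : j ^ 2 ≤ 4 * N - 3 := by omega
  have hRsq : Real.sqrt N ^ 2 = (N : ℝ) := Real.sq_sqrt (by positivity)
  have hR0 : (0 : ℝ) ≤ Real.sqrt N := Real.sqrt_nonneg _
  have hR1 : (1 : ℝ) ≤ Real.sqrt N := by nlinarith [(by exact_mod_cast hN : (8:ℝ) ≤ (N:ℝ))]
  have hj2R : (j : ℝ) ^ 2 ≤ 4 * (N : ℝ) - 3 := by exact_mod_cast hj2
  have hjR : (j : ℝ) ≤ 2 * Real.sqrt N := by nlinarith
  have hjm : (-1 : ℝ) ≤ (j : ℝ) := by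
    have : (-1 : ℤ) ≤ j := by omega
    exact_mod_cast this
  have habR : ((a * b : ℤ) : ℝ) ≤ (N : ℝ) + 3 / 2 * Real.sqrt N := by
    have h4 : 4 * ((a * b : ℤ) : ℝ) ≤ ((j : ℝ) + 1) ^ 2 := by exact_mod_cast hpu4
    nlinarith [mul_nonneg (by linarith : (0:ℝ) ≤ 2 * Real.sqrt N - (j:ℝ))
      (by linarith : (0:ℝ) ≤ 2 * Real.sqrt N + (j:ℝ) + 2)]
  have e3 : (N - a) * (N - b) = N * (N - j) + (a * b - N) := by
    linear_combination (-(N : ℤ)) * hsumj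
  refine ⟨hsumj, ⟨by exact_mod_cast hpl, habR⟩, by exact_mod_cast h1, ?_⟩
  rw [e3]
  push_cast at habR ⊢
  linarith
end

section
/- Let N, j be positive integers with ⌊j²/4⌋ < N and ⌈j/2⌉ < N, and let a, b be integers with 0 ≤ a ≤ b ≤ N. Then (N−⌊j/2⌋)(N−⌈j/2⌉) ≤ (N−a)(N−b) ≤ N(N−(j−1)) holds if and only if (a,b) = (0, j−1) or (a,b) = (⌊j/2⌋, ⌈j/2⌉). -/
lemma core_lemma (N f c a b : ℤ) (hf : 0 ≤ f) (hfc : f ≤ c) (hcf : c ≤ f + 1)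
    (hN1 : f * c < N) (hcN : c < N) (ha : 0 ≤ a) (hab : a ≤ b) (hbN : b ≤ N) :
    ((N - f) * (N - c) ≤ (N - a) * (N - b) ∧
        (N - a) * (N - b) ≤ N * (N - (f + c - 1))) ↔
      ((a = 0 ∧ b = f + c - 1) ∨ (a = f ∧ b = c)) := by
  have hN : 1 ≤ N := by omega
  constructor
  · rintro ⟨L, U⟩
    have hab_nn : 0 ≤ a * b := mul_nonneg ha (ha.trans hab)
    by_cases h : a + b ≤ f + c - 1
    · left
      have key : a * b ≤ (a + b - (f + c) + 1) * N := by nlinarith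
      have hs : a + b = f + c - 1 := by nlinarith
      have hab0 : a * b = 0 := by nlinarith
      have ha0 : a = 0 := by nlinarith
      omega
    · right
      push_neg at h
      have hs : a + b = f + c := by
        by_contra hne
        have h2 : f + c + 1 ≤ a + b := by omega
        nlinarith [sq_nonneg (a - b), sq_nonneg (2 * N - a - b)]
      have hd : b - a ≤ c - f := by nlinarith [sq_nonneg (b - a)]
      omega
  · rintro (⟨rfl, rfl⟩ | ⟨rfl, rfl⟩)
    · exact ⟨by nlinarith, le_of_eq (by ring)⟩
    · exact ⟨le_rfl, by nlinarith⟩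

theorem large_interval_classification (N j : ℤ) (hN : 1 ≤ N) (hjpos : 1 ≤ j)
    (hj : ⌊(j : ℚ) ^ 2 / 4⌋ < N) (hj2 : ⌈(j : ℚ) / 2⌉ < N)
    (a b : ℤ) (ha : 0 ≤ a) (hab : a ≤ b) (hbN : b ≤ N) :
    ((N - ⌊(j : ℚ) / 2⌋) * (N - ⌈(j : ℚ) / 2⌉) ≤ (N - a) * (N - b) ∧
        (N - a) * (N - b) ≤ N * (N - (j - 1))) ↔
      ((a = 0 ∧ b = j - 1) ∨ (a = ⌊(j : ℚ) / 2⌋ ∧ b = ⌈(j : ℚ) / 2⌉)) := by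
  rcases Int.even_or_odd j with ⟨k, hk⟩ | ⟨k, hk⟩
  · have hfl : ⌊(j : ℚ) / 2⌋ = k := by
      rw [hk]; push_cast
      rw [show ((k : ℚ) + k) / 2 = (k : ℚ) by ring, Int.floor_intCast]
    have hcl : ⌈(j : ℚ) / 2⌉ = k := by
      rw [hk]; push_cast
      rw [show ((k : ℚ) + k) / 2 = (k : ℚ) by ring, Int.ceil_intCast]
    have hsq : ⌊(j : ℚ) ^ 2 / 4⌋ = k * k := by
      rw [hk]; push_cast
      rw [show ((k : ℚ) + k) ^ 2 / 4 = ((k * k : ℤ) : ℚ) by push_cast; ring,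
        Int.floor_intCast]
    rw [hsq] at hj; rw [hcl] at hj2
    rw [hfl, hcl, show j - 1 = k + k - 1 by omega]
    exact core_lemma N k k a b (by omega) le_rfl (by omega) hj (by omega) ha hab hbN
  · have hfl : ⌊(j : ℚ) / 2⌋ = k := by
      rw [hk]; push_cast
      rw [Int.floor_eq_iff]
      constructor <;> push_cast <;> linarith
    have hcl : ⌈(j : ℚ) / 2⌉ = k + 1 := by
      rw [hk]
      rw [Int.ceil_eq_iff]
      constructor <;> push_cast <;> linarith
    have hsq : ⌊(j : ℚ) ^ 2 / 4⌋ = k * (k + 1) := by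
      rw [hk]
      rw [Int.floor_eq_iff]
      constructor <;> push_cast <;> nlinarith [sq_nonneg ((k:ℚ))]
    rw [hsq] at hj; rw [hcl] at hj2
    rw [hfl, hcl, show j - 1 = k + (k + 1) - 1 by omega]
    exact core_lemma N k (k + 1) a b (by omega) (by omega) le_rfl hj (by omega) ha hab hbN
end

section
/- Let N ≥ 2 and let R be the largest integer j with ⌊j²/4⌋ < N. For every integer j with 1 ≤ j ≤ R, the integer N − ⌊j²/4⌋ is a primitive gap of the N×N multiplication table; specifically, (N−⌊j/2⌋)(N−⌈j/2⌉) and N(N−(j−1)) are both elements of the table, their difference is N − ⌊j²/4⌋, and no element of the table lies strictly between them. -/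
def multTable (N : ℕ) : Set ℕ := {n | ∃ a b : ℕ, 1 ≤ a ∧ a ≤ N ∧ 1 ≤ b ∧ b ≤ N ∧ n = a * b}

lemma fc_eq (j : ℕ) : (j/2) * ((j+1)/2) = j^2/4 := by
  rcases Nat.even_or_odd j with ⟨m, rfl⟩ | ⟨m, rfl⟩
  · have h : (m+m)^2 = 4*(m*m) := by ring
    have h1 : (m+m)/2 = m := by omega
    have h2 : (m+m+1)/2 = m := by omega
    rw [h1, h2, h]
    generalize m*m = k
    omega
  · have h : (2*m+1)^2 = 4*(m*(m+1)) + 1 := by ring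
    have h1 : (2*m+1)/2 = m := by omega
    have h2 : (2*m+1+1)/2 = m+1 := by omega
    rw [h1, h2, h]
    generalize m*(m+1) = k
    omega

lemma sq_mod (s : ℕ) : s^2 % 4 = s % 2 := by
  rcases Nat.even_or_odd s with ⟨m, rfl⟩ | ⟨m, rfl⟩
  · have h : (m+m)^2 = 4*(m*m) := by ring
    rw [h]; generalize m*m = k; omega
  · have h : (2*m+1)^2 = 4*(m*(m+1)) + 1 := by ring
    rw [h]; generalize m*(m+1) = k; omega

lemma amgm (x y : ℕ) : x*y ≤ (x+y)^2/4 := by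
  have h : x*y*4 ≤ (x+y)^2 := by zify; nlinarith [sq_nonneg ((x:ℤ) - y)]
  exact (Nat.le_div_iff_mul_le (by norm_num)).mpr h

lemma add_le_mul_succ (a b : ℕ) (ha : 1 ≤ a) (hb : 1 ≤ b) : a + b ≤ a*b + 1 := by
  obtain ⟨a, rfl⟩ := Nat.exists_eq_add_of_le ha
  obtain ⟨b, rfl⟩ := Nat.exists_eq_add_of_le hb
  nlinarith

lemma step (j d N : ℕ) (hd : 1 ≤ d) (hs : j + d + 2 ≤ 2*N) :
    (j+d)^2/4 + d ≤ j^2/4 + d*N := by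
  have hA := Nat.div_add_mod ((j+d)^2) 4
  have hB := Nat.div_add_mod (j^2) 4
  rw [sq_mod] at hA hB
  have hexp : (j+d)^2 = j^2 + 2*(j*d) + d*d := by ring
  have A1 : j*d + d*d + 2*d ≤ 2*(d*N) := by
    calc j*d + d*d + 2*d = d*(j+d+2) := by ring
    _ ≤ d*(2*N) := Nat.mul_le_mul_left d hs
    _ = 2*(d*N) := by ring
  have A2 : j*d + 3*d ≤ 2*(d*N) := by
    calc j*d + 3*d = d*(j+3) := by ring
    _ ≤ d*(2*N) := Nat.mul_le_mul_left d (by omega)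
    _ = 2*(d*N) := by ring
  rw [hexp] at hA ⊢
  generalize hP : j*d = P at hA A1 A2
  generalize hD : d*d = D at hA A1
  generalize hM : d*N = M at A1 A2 ⊢
  generalize hQ : j^2 = Q at hA hB ⊢
  omega

theorem big_gaps_exist (N R : ℕ) (hN : 2 ≤ N)
    (hR1 : R ^ 2 / 4 < N) (hR2 : ∀ j : ℕ, j ^ 2 / 4 < N → j ≤ R) :
    ∀ j : ℕ, 1 ≤ j → j ≤ R →
      (N - j / 2) * (N - (j + 1) / 2) ∈ multTable N ∧
      N * (N - (j - 1)) ∈ multTable N ∧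
      N * (N - (j - 1)) - (N - j / 2) * (N - (j + 1) / 2) = N - j ^ 2 / 4 ∧
      ∀ t ∈ multTable N,
        (N - j / 2) * (N - (j + 1) / 2) ≤ t → t ≤ N * (N - (j - 1)) →
        t = (N - j / 2) * (N - (j + 1) / 2) ∨ t = N * (N - (j - 1)) := by
  intro j hj1 hjR
  have hq : j^2/4 < N :=
    lt_of_le_of_lt (Nat.div_le_div_right (Nat.pow_le_pow_left hjR 2)) hR1
  have hfc : (j/2) * ((j+1)/2) = j^2/4 := fc_eq j
  have hsum : j/2 + (j+1)/2 = j := by omega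
  -- f := j/2 < N
  have hfN : j/2 < N := by
    refine lt_of_le_of_lt ?_ hq
    exact le_trans (Nat.le_mul_of_pos_right _ (by omega)) hfc.le
  -- c := (j+1)/2 < N
  have hcN : (j+1)/2 < N := by
    rcases Nat.lt_or_ge j 2 with h | h
    · omega
    · refine lt_of_le_of_lt ?_ hq
      exact le_trans (Nat.le_mul_of_pos_left _ (by omega)) hfc.le
  -- j ≤ N
  have hjN : j ≤ N := by
    rcases Nat.lt_or_ge j 2 with h | h
    · omega
    · have h3 : j/2 + (j+1)/2 ≤ (j/2)*((j+1)/2) + 1 :=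
        add_le_mul_succ _ _ (by omega) (by omega)
      have h4 : j ≤ j^2/4 + 1 := by rw [← hfc]; omega
      have h5 : j^2/4 + 1 ≤ N := hq
      omega
  refine ⟨⟨N - j/2, N - (j+1)/2, by omega, by omega, by omega, by omega, rfl⟩,
    ⟨N, N - (j-1), by omega, le_rfl, by omega, by omega, rfl⟩, ?_, ?_⟩
  case _ =>
    -- the difference computation
    have hL : (N - j/2) * (N - (j+1)/2) = N*(N-j) + (j/2)*((j+1)/2) := by
      have h1 : j/2 ≤ N := le_of_lt hfN
      have h2 : (j+1)/2 ≤ N := le_of_lt hcN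
      zify [h1, h2, hjN]
      have h3 : ((j:ℤ)+1)/2 = (j:ℤ) - (j:ℤ)/2 := by omega
      rw [h3]; ring
    have hU : N * (N - (j-1)) = N*(N-j) + N := by
      have h : N - (j-1) = (N - j) + 1 := by omega
      rw [h, Nat.mul_add, Nat.mul_one]
    rw [hL, hU, ← hfc]
    generalize N*(N-j) = K
    generalize (j/2)*((j+1)/2) = P
    omega
  case _ =>
    intro t ht hLt htU
    obtain ⟨a, b, ha1, haN, hb1, hbN, rfl⟩ := ht
    obtain ⟨x, hx⟩ : ∃ x, a + x = N := ⟨N - a, by omega⟩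
    obtain ⟨y, hy⟩ : ∃ y, b + y = N := ⟨N - b, by omega⟩
    have hL : (N - j/2) * (N - (j+1)/2) = N*(N-j) + (j/2)*((j+1)/2) := by
      have h1 : j/2 ≤ N := le_of_lt hfN
      have h2 : (j+1)/2 ≤ N := le_of_lt hcN
      zify [h1, h2, hjN]
      have h3 : ((j:ℤ)+1)/2 = (j:ℤ) - (j:ℤ)/2 := by omega
      rw [h3]; ring
    have hU : N * (N - (j-1)) = N*(N-j) + N := by
      have h : N - (j-1) = (N - j) + 1 := by omega
      rw [h, Nat.mul_add, Nat.mul_one]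
    have hLZ : (((N - j/2) * (N - (j+1)/2) : ℕ) : ℤ)
        = (N:ℤ)^2 - j*N + ((j^2/4 : ℕ) : ℤ) := by
      rw [hL, hfc]
      push_cast [hjN]
      ring
    have hUZ : ((N * (N - (j-1)) : ℕ) : ℤ) = (N:ℤ)^2 - ((j:ℤ)-1)*N := by
      rw [hU]
      push_cast [hjN]
      ring
    have key : (a:ℤ)*b + ((x:ℤ)+y)*N = (N:ℤ)^2 + (x:ℤ)*y := by
      have hx' : (a:ℤ) = (N:ℤ) - x := by omega
      have hy' : (b:ℤ) = (N:ℤ) - y := by omega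
      rw [hx', hy']; ring
    have hLt' : (N:ℤ)^2 - j*N + ((j^2/4 : ℕ) : ℤ) ≤ (a:ℤ)*b := by
      rw [← hLZ]; exact_mod_cast hLt
    have htU' : (a:ℤ)*b ≤ (N:ℤ)^2 - ((j:ℤ)-1)*N := by
      rw [← hUZ]; exact_mod_cast htU
    have hNpos : (0:ℤ) < N := by omega
    rcases lt_trichotomy (x+y) j with hcase | hcase | hcase
    · -- s < j : t = upper element
      right
      have e1 : (x:ℤ)*y + ((j:ℤ)-1)*N ≤ ((x:ℤ)+y)*N := by linarith [key, htU']
      have hle : (x:ℤ)+y ≤ (j:ℤ)-1 := by omega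
      have hmono : ((x:ℤ)+y)*N ≤ ((j:ℤ)-1)*N :=
        mul_le_mul_of_nonneg_right hle (le_of_lt hNpos)
      have hxyz : (x:ℤ)*y = 0 :=
        le_antisymm (by linarith) (by positivity)
      have hge : ((j:ℤ)-1)*N ≤ ((x:ℤ)+y)*N := by linarith
      have hge' : (j:ℤ)-1 ≤ (x:ℤ)+y := le_of_mul_le_mul_right hge hNpos
      have hsxy : x + y = j - 1 := by omega
      have hxy0 : x * y = 0 := by exact_mod_cast hxyz
      rcases Nat.mul_eq_zero.mp hxy0 with h0 | h0
      · have hbb : b = N - (j-1) := by omega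
        have haa : a = N := by omega
        rw [haa, hbb]
      · have haa : a = N - (j-1) := by omega
        have hbb : b = N := by omega
        rw [haa, hbb, Nat.mul_comm]
    · -- s = j : t = lower element
      left
      have hF1 : ((j^2/4 : ℕ) : ℤ) ≤ (x:ℤ)*y := by
        have hsx : ((x:ℤ)+y)*N = (j:ℤ)*N := by
          have : (x:ℤ)+y = (j:ℤ) := by omega
          rw [this]
        linarith [key, hLt']
      have hF1' : j^2/4 ≤ x*y := by exact_mod_cast hF1
      have hF2 : x*y ≤ j^2/4 := by
        have := amgm x y
        rwa [hcase] at this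
      have hxyF : x*y = j^2/4 := le_antisymm hF2 hF1'
      have : ((a*b : ℕ) : ℤ) = (((N - j/2) * (N - (j+1)/2) : ℕ) : ℤ) := by
        rw [hLZ]
        push_cast
        have hxyF' : (x:ℤ)*y = ((j^2/4 : ℕ) : ℤ) := by exact_mod_cast hxyF
        have hsx : ((x:ℤ)+y)*N = (j:ℤ)*N := by
          have : (x:ℤ)+y = (j:ℤ) := by omega
          rw [this]
        linarith [key]
      exact_mod_cast this
    · -- s > j : impossible
      exfalso
      obtain ⟨d, hdeq⟩ : ∃ d, x + y = j + d := ⟨x+y-j, by omega⟩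
      have hd1 : 1 ≤ d := by omega
      have hstep := step j d N hd1 (by omega)
      rw [← hdeq] at hstep
      have c1 : (x:ℤ)*y ≤ (((x+y)^2/4 : ℕ) : ℤ) := by exact_mod_cast amgm x y
      have c2 : (((x+y)^2/4 : ℕ) : ℤ) + d ≤ ((j^2/4 : ℕ) : ℤ) + (d:ℤ)*N := by
        exact_mod_cast hstep
      have hsx : ((x:ℤ)+y)*N = (j:ℤ)*N + (d:ℤ)*N := by
        have : (x:ℤ)+y = (j:ℤ) + d := by omega
        rw [this]; ring
      have c3 : ((j^2/4 : ℕ) : ℤ) + (d:ℤ)*N ≤ (x:ℤ)*y := by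
        linarith [key, hLt']
      have hd1' : (1:ℤ) ≤ d := by omega
      linarith
end

section
/- Let N ≥ 2 and let R be the largest integer j with ⌊j²/4⌋ < N. Then for every integer g with 1 ≤ g ≤ R − 2, g occurs as a primitive gap of the N×N multiplication table: there exist consecutive elements of the table differing by exactly g. -/
lemma key (g c a b s t : ℤ) (hg : 1 ≤ g)
    (hc : (g + 2) ^ 2 < 4 * (g + 2 + c))
    (hs0 : 0 ≤ s) (ht0 : 0 ≤ t) (hsg : s ≤ g) (htg : t ≤ g)
    (hs : a + s = g + 2 + c) (ht : b + t = g + 2 + c)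
    (h1 : (c + 1) * (g + 2 + c) < a * b)
    (h2 : a * b < (c + 2) * (g + 1 + c)) : False := by
  have ha : a = g + 2 + c - s := by linarith
  have hb : b = g + 2 + c - t := by linarith
  subst ha hb
  rcases lt_trichotomy (s + t) (g + 1) with h | h | h
  · nlinarith [mul_nonneg hs0 ht0]
  · have hst : 0 < s * t := by nlinarith
    have hs1 : 1 ≤ s := by
      rcases hs0.lt_or_eq with h' | h'
      · linarith
      · exfalso; nlinarith
    have ht1 : 1 ≤ t := by
      rcases ht0.lt_or_eq with h' | h'
      · linarith
      · exfalso; nlinarith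
    nlinarith [mul_nonneg (by linarith : (0:ℤ) ≤ s - 1) (by linarith : (0:ℤ) ≤ t - 1)]
  · have hd : 1 ≤ s + t - g - 1 := by linarith
    have hstM : (s + t - g - 1) * (g + 2 + c) < s * t := by nlinarith
    have h4 : 4 * (s * t) ≤ (s + t) ^ 2 := by nlinarith [sq_nonneg (s - t)]
    have h5 : (s + t) ^ 2 ≤ 4 * ((s + t - g - 1) * (g + 2 + c)) := by
      nlinarith [mul_nonneg (by linarith : (0:ℤ) ≤ s + t - g - 2) (by linarith : (0:ℤ) ≤ 2 * g - (s + t)),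
        mul_nonneg (by linarith : (0:ℤ) ≤ s + t - g - 2) (by nlinarith : (0:ℤ) ≤ g ^ 2 + g + 3),
        mul_nonneg (by linarith : (0:ℤ) ≤ s + t - g - 1) (by linarith : (0:ℤ) ≤ 4 * (g + 2 + c) - (g + 2) ^ 2 - 1)]
    linarith

theorem small_gaps_exist (N R : ℕ) (hN : 2 ≤ N)
    (hR1 : R ^ 2 / 4 < N) (hR2 : ∀ j : ℕ, j ^ 2 / 4 < N → j ≤ R) :
    ∀ g : ℕ, 1 ≤ g → g ≤ R - 2 →
      ∃ m ∈ multTable N, ∃ m' ∈ multTable N, m < m' ∧ m' - m = g ∧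
        ∀ t ∈ multTable N, m < t → t < m' → False := by
  intro g hg1 hg2
  have hR4 : R ^ 2 < 4 * N := by
    have h := (Nat.div_lt_iff_lt_mul (by norm_num : 0 < (4:ℕ))).mp hR1
    omega
  have hgR : g + 2 ≤ R := by omega
  have hg4N : (g + 2) ^ 2 < 4 * N := lt_of_le_of_lt (Nat.pow_le_pow_left hgR 2) hR4
  have hgN : g + 2 ≤ N := by nlinarith
  obtain ⟨c, rfl⟩ : ∃ c, N = g + 2 + c := ⟨N - (g + 2), by omega⟩
  refine ⟨(c + 1) * (g + 2 + c),
    ⟨c + 1, g + 2 + c, by omega, by omega, by omega, by omega, rfl⟩,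
    (c + 2) * (g + 1 + c),
    ⟨c + 2, g + 1 + c, by omega, by omega, by omega, by omega, rfl⟩, ?_, ?_, ?_⟩
  · nlinarith
  · have : (c + 2) * (g + 1 + c) = (c + 1) * (g + 2 + c) + g := by ring
    omega
  · rintro x ⟨a, b, ha1, haN, hb1, hbN, rfl⟩ hx1 hx2
    have ha2 : c + 2 ≤ a := by
      by_contra h
      push_neg at h
      have : a * b ≤ (c + 1) * (g + 2 + c) := Nat.mul_le_mul (by omega) hbN
      omega
    have hb2 : c + 2 ≤ b := by
      by_contra h
      push_neg at h
      have : a * b ≤ (g + 2 + c) * (c + 1) := Nat.mul_le_mul haN (by omega)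
      nlinarith
    refine key (g : ℤ) c a b ((g : ℤ) + 2 + c - a) ((g : ℤ) + 2 + c - b)
      (by exact_mod_cast hg1) (by push_cast; nlinarith)
      (by omega) (by omega)
      (by omega) (by omega)
      (by ring) (by ring)
      (by exact_mod_cast hx1) (by exact_mod_cast hx2)
end

section
/- Let k ≥ 2 be an integer and N = k² or N = k² − 1. Then (k(k−1))² = k²(k²−2k+1) and (k²−1)(k²−2k+2) both belong to the N×N multiplication table, their difference equals 2k − 2, and no element of the N×N multiplication table lies strictly between them. -/
lemma key_gap (m a b : ℕ) (ha1 : 1 ≤ a) (hab : a ≤ b) (hbN : b ≤ (m+2)^2)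
    (h1 : ((m+2)*(m+1))^2 < a*b) (h2 : a*b < ((m+2)*(m+1))^2 + (2*m+2)) : False := by
  have ha_lb : (m+1)^2 < a := by
    nlinarith [Nat.mul_le_mul_left a hbN]
  have ha_ub : a ≤ (m+2)*(m+1) := by
    by_contra h
    push_neg at h
    nlinarith [Nat.mul_le_mul hab (le_refl b), Nat.mul_le_mul h h]
  obtain ⟨j, rfl⟩ : ∃ j, a = (m+1)^2 + j := ⟨a - (m+1)^2, by omega⟩
  have hj1 : 1 ≤ j := by omega
  have hj2 : j ≤ m + 1 := by nlinarith
  rcases le_or_gt ((m+2)^2) (b + j) with hc | hc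
  · have h3 : ((m+1)^2 + j) * (m+2)^2 ≤ ((m+1)^2 + j) * (b + j) :=
      Nat.mul_le_mul_left _ hc
    nlinarith [Nat.mul_le_mul_left j hj1]
  · have h3 : ((m+1)^2 + j) * (b + j + 1) ≤ ((m+1)^2 + j) * (m+2)^2 :=
      Nat.mul_le_mul_left _ (by omega)
    nlinarith [sq_nonneg ((m:ℤ) + 1 - j)]

theorem gap_Rminus1_case_square (k N : ℕ) (hk : 2 ≤ k) (hN : N = k ^ 2 ∨ N = k ^ 2 - 1) :
    (k * (k - 1)) ^ 2 = k ^ 2 * (k ^ 2 - 2 * k + 1) ∧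
    (k * (k - 1)) ^ 2 ∈ multTable N ∧
    (k ^ 2 - 1) * (k ^ 2 - 2 * k + 2) ∈ multTable N ∧
    (k ^ 2 - 1) * (k ^ 2 - 2 * k + 2) - (k * (k - 1)) ^ 2 = 2 * k - 2 ∧
    ∀ t ∈ multTable N, (k * (k - 1)) ^ 2 < t → t < (k ^ 2 - 1) * (k ^ 2 - 2 * k + 2) → False := by
  obtain ⟨m, rfl⟩ : ∃ m, k = m + 2 := ⟨k - 2, by omega⟩
  have e0 : (m + 2) ^ 2 = m ^ 2 + 4 * m + 4 := by ring
  have e1 : m + 2 - 1 = m + 1 := by omega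
  have e2 : (m + 2) ^ 2 - 2 * (m + 2) + 1 = m ^ 2 + 2 * m + 1 := by omega
  have e3 : (m + 2) ^ 2 - 1 = m ^ 2 + 4 * m + 3 := by omega
  have e4 : (m + 2) ^ 2 - 2 * (m + 2) + 2 = m ^ 2 + 2 * m + 2 := by omega
  have hN' : m ^ 2 + 4 * m + 3 ≤ N ∧ N ≤ (m + 2) ^ 2 := by omega
  rw [e1, e2, e3, e4]
  refine ⟨by ring, ?_, ?_, ?_, ?_⟩
  · exact ⟨(m+2)*(m+1), (m+2)*(m+1), by nlinarith [hN'.1], by nlinarith [hN'.1],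
      by nlinarith [hN'.1], by nlinarith [hN'.1], by ring⟩
  · exact ⟨m^2+4*m+3, m^2+2*m+2, by omega, by omega, by omega, by omega, rfl⟩
  · have : (m^2+4*m+3) * (m^2+2*m+2) = ((m+2)*(m+1))^2 + (2*m+2) := by ring
    omega
  · rintro t ⟨a, b, ha1, haN, hb1, hbN, rfl⟩ hlo hhi
    have hgap : (m^2+4*m+3) * (m^2+2*m+2) = ((m+2)*(m+1))^2 + (2*m+2) := by ring
    have hM : ((m+1)*(m+2))^2 = ((m+2)*(m+1))^2 := by ring
    rcases le_total a b with hab | hab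
    · exact key_gap m a b ha1 hab (by omega) (by omega) (by omega)
    · exact key_gap m b a hb1 hab (by omega) (by rw [mul_comm b a]; omega)
        (by rw [mul_comm b a]; omega)
end

section
/- Let k ≥ 2 be an integer and N = k² + k or N = k² + k − 1. Then k²(k²−1) and (k²+k−1)(k²−k+1) both belong to the N×N multiplication table, their difference equals 2k − 1, and no element of the N×N multiplication table lies strictly between them. -/
set_option maxHeartbeats 1000000


theorem gap_Rminus1_case_pronic (k N : ℕ) (hk : 2 ≤ k)
    (hN : N = k ^ 2 + k ∨ N = k ^ 2 + k - 1) :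
    k ^ 2 * (k ^ 2 - 1) ∈ multTable N ∧
    (k ^ 2 + k - 1) * (k ^ 2 - k + 1) ∈ multTable N ∧
    (k ^ 2 + k - 1) * (k ^ 2 - k + 1) - k ^ 2 * (k ^ 2 - 1) = 2 * k - 1 ∧
    ∀ t ∈ multTable N, k ^ 2 * (k ^ 2 - 1) < t → t < (k ^ 2 + k - 1) * (k ^ 2 - k + 1) → False := by
  obtain ⟨e, rfl⟩ : ∃ e, k = e + 2 := ⟨k - 2, by omega⟩
  have hsq : (e + 2) ^ 2 = e ^ 2 + 4 * e + 4 := by ring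
  rw [hsq] at hN ⊢
  have e1 : e ^ 2 + 4 * e + 4 - 1 = e ^ 2 + 4 * e + 3 := by omega
  have e2 : e ^ 2 + 4 * e + 4 + (e + 2) - 1 = e ^ 2 + 5 * e + 5 := by omega
  have e3 : e ^ 2 + 4 * e + 4 - (e + 2) + 1 = e ^ 2 + 3 * e + 3 := by omega
  have e4 : 2 * (e + 2) - 1 = 2 * e + 3 := by omega
  rw [e1, e2, e3, e4]
  have hNlo : e ^ 2 + 5 * e + 5 ≤ N := by rcases hN with h | h <;> omega
  have hNhi : N ≤ e ^ 2 + 5 * e + 6 := by rcases hN with h | h <;> omega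
  refine ⟨⟨e ^ 2 + 4 * e + 4, e ^ 2 + 4 * e + 3, by omega, by omega, by omega, by omega, rfl⟩,
    ⟨e ^ 2 + 5 * e + 5, e ^ 2 + 3 * e + 3, by omega, by omega, by omega, by omega, rfl⟩, ?_, ?_⟩
  · have : (e ^ 2 + 5 * e + 5) * (e ^ 2 + 3 * e + 3)
        = (e ^ 2 + 4 * e + 4) * (e ^ 2 + 4 * e + 3) + (2 * e + 3) := by ring
    omega
  · rintro t ⟨a, b, ha1, haN, hb1, hbN, rfl⟩ hlo hhi
    -- cast to ℤ
    have ha1' : (1 : ℤ) ≤ (a : ℤ) := by exact_mod_cast ha1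
    have hb1' : (1 : ℤ) ≤ (b : ℤ) := by exact_mod_cast hb1
    have haM : (a : ℤ) ≤ (e : ℤ) ^ 2 + 5 * e + 6 := by
      have : a ≤ e ^ 2 + 5 * e + 6 := le_trans haN hNhi
      exact_mod_cast this
    have hbM : (b : ℤ) ≤ (e : ℤ) ^ 2 + 5 * e + 6 := by
      have : b ≤ e ^ 2 + 5 * e + 6 := le_trans hbN hNhi
      exact_mod_cast this
    have hlo' : ((e : ℤ) ^ 2 + 4 * e + 4) * ((e : ℤ) ^ 2 + 4 * e + 3) < (a : ℤ) * b := by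
      exact_mod_cast hlo
    have hhi' : (a : ℤ) * b < ((e : ℤ) ^ 2 + 5 * e + 5) * ((e : ℤ) ^ 2 + 3 * e + 3) := by
      exact_mod_cast hhi
    set A : ℤ := (a : ℤ)
    set B : ℤ := (b : ℤ)
    set E : ℤ := (e : ℤ)
    have hE : 0 ≤ E := Int.natCast_nonneg e
    -- a ≥ e^2+3e+3
    have haLB : E ^ 2 + 3 * E + 3 ≤ A := by
      by_contra h
      push_neg at h
      have h' : A ≤ E ^ 2 + 3 * E + 2 := by omega
      have hq : A * B ≤ (E ^ 2 + 3 * E + 2) * (E ^ 2 + 5 * E + 6) :=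
        mul_le_mul h' hbM (by omega) (by nlinarith)
      nlinarith
    have hbLB : E ^ 2 + 3 * E + 3 ≤ B := by
      by_contra h
      push_neg at h
      have h' : B ≤ E ^ 2 + 3 * E + 2 := by omega
      have hq : B * A ≤ (E ^ 2 + 3 * E + 2) * (E ^ 2 + 5 * E + 6) :=
        mul_le_mul h' haM (by omega) (by nlinarith)
      nlinarith [mul_comm A B]
    -- i = A - (E^2+3E+2), j likewise, 1 ≤ i,j ≤ 2E+4
    set i : ℤ := A - (E ^ 2 + 3 * E + 2) with hi
    set j : ℤ := B - (E ^ 2 + 3 * E + 2) with hj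
    have hi1 : 1 ≤ i := by omega
    have hj1 : 1 ≤ j := by omega
    have hi2 : i ≤ 2 * E + 4 := by omega
    have hj2 : j ≤ 2 * E + 4 := by omega
    have key : A * B = (E ^ 2 + 3 * E + 2) ^ 2 + (i + j) * (E ^ 2 + 3 * E + 2) + i * j := by
      simp only [hi, hj]; ring
    rw [key] at hlo' hhi'
    clear key hi hj haLB hbLB haM hbM ha1' hb1' hlo hhi
    rcases lt_trichotomy (i + j) (2 * E + 4) with hs | hs | hs
    · nlinarith [sq_nonneg (i - j), mul_nonneg (by omega : (0:ℤ) ≤ 2 * E + 3 - (i + j)) (by nlinarith : (0:ℤ) ≤ E ^ 2 + 3 * E + 2)]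
    · nlinarith [mul_nonneg (by omega : (0:ℤ) ≤ i - 1) (by omega : (0:ℤ) ≤ j - 1)]
    · nlinarith [mul_nonneg (by omega : (0:ℤ) ≤ i + j - (2 * E + 5)) (by nlinarith : (0:ℤ) ≤ E ^ 2 + 3 * E + 2), mul_pos (by omega : (0:ℤ) < i) (by omega : (0:ℤ) < j)]
end

section
/- Let k ≥ 2 and N = k². Then (k²−k+1)² and k²(k²−2k+3) are both elements of the N×N multiplication table, their difference equals 2k − 1, and no element of the N×N multiplication table lies strictly between them. -/
lemma gap_key (k a b : ℤ) (hk : 2 ≤ k) (ha1 : 1 ≤ a) (haN : a ≤ k ^ 2)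
    (hb1 : 1 ≤ b) (hbN : b ≤ k ^ 2) (hab : a ≤ b)
    (hL : (k ^ 2 - k + 1) ^ 2 < a * b) (hU : a * b < k ^ 2 * (k ^ 2 - 2 * k + 3)) : False := by
  have h1 : k ^ 2 - 2 * k + 3 ≤ a := by
    by_contra h
    push_neg at h
    have h' : a ≤ k ^ 2 - 2 * k + 2 := by omega
    have : a * b ≤ (k ^ 2 - 2 * k + 2) * k ^ 2 :=
      mul_le_mul h' hbN (by linarith) (by nlinarith)
    nlinarith
  have h2 : b ≤ k ^ 2 - 1 := by
    by_contra h
    push_neg at h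
    have hb : b = k ^ 2 := by omega
    have : (k ^ 2 - 2 * k + 3) * k ^ 2 ≤ a * b := by
      rw [hb]; exact mul_le_mul_of_nonneg_right h1 (by positivity)
    nlinarith
  rcases le_or_gt a (k ^ 2 - k) with hc | hc
  · -- a ≤ k² - k
    have hb' : k ^ 2 - k + 1 ≤ b := by nlinarith
    set A : ℤ := k ^ 2 - k + 1 with hA
    set r : ℤ := b - A with hr
    set s : ℤ := A - a with hs
    have hr0 : 0 ≤ r := by omega
    have hs0 : 1 ≤ s := by omega
    have hrk : r ≤ k - 2 := by omega
    have hsk : s ≤ k - 2 := by omega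
    have hrs : r * s ≤ (k - 2) * (k - 2) := mul_le_mul hrk hsk (by linarith) (by linarith)
    have hA0 : 0 < A := by nlinarith
    have hab' : a * b = A * A + (r - s) * A - r * s := by rw [hr, hs]; ring
    have hLA : (k ^ 2 - k + 1) ^ 2 = A * A := by rw [hA]; ring
    have hUA : k ^ 2 * (k ^ 2 - 2 * k + 3) = A * A + (2 * k - 1) := by rw [hA]; ring
    have hL' : r * s < (r - s) * A := by rw [hLA, hab'] at hL; linarith
    have hU' : (r - s) * A - r * s < 2 * k - 1 := by rw [hUA, hab'] at hU; linarith
    have hrs0 : 0 ≤ r * s := mul_nonneg hr0 (by omega)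
    have hd : 1 ≤ r - s := by
      by_contra h
      push_neg at h
      have : (r - s) * A ≤ 0 := mul_nonpos_of_nonpos_of_nonneg (by omega) hA0.le
      linarith
    have e1 : 1 * A ≤ (r - s) * A := mul_le_mul_of_nonneg_right hd hA0.le
    have e2 : (k - 2) * (k - 2) = k ^ 2 - 4 * k + 4 := by ring
    linarith
  · -- a ≥ k² - k + 1
    have hbA : k ^ 2 - k + 1 < b := by nlinarith
    have : (k ^ 2 - k + 1) * (k ^ 2 - k + 2) ≤ a * b :=
      mul_le_mul (by omega) (by omega) (by nlinarith) (by linarith)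
    nlinarith

theorem gap_R_case_square (k N : ℕ) (hk : 2 ≤ k) (hN : N = k ^ 2) :
    (k ^ 2 - k + 1) ^ 2 ∈ multTable N ∧
    k ^ 2 * (k ^ 2 - 2 * k + 3) ∈ multTable N ∧
    k ^ 2 * (k ^ 2 - 2 * k + 3) - (k ^ 2 - k + 1) ^ 2 = 2 * k - 1 ∧
    ∀ t ∈ multTable N, (k ^ 2 - k + 1) ^ 2 < t → t < k ^ 2 * (k ^ 2 - 2 * k + 3) → False := by
  subst hN
  have hk1 : k ≤ k ^ 2 := by nlinarith
  have hk2 : 2 * k ≤ k ^ 2 := by nlinarith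
  refine ⟨⟨k ^ 2 - k + 1, k ^ 2 - k + 1, by omega, by omega, by omega, by omega, by ring⟩,
    ⟨k ^ 2, k ^ 2 - 2 * k + 3, by omega, le_refl _, by omega, by omega, rfl⟩, ?_, ?_⟩
  · have hle : (k ^ 2 - k + 1) ^ 2 ≤ k ^ 2 * (k ^ 2 - 2 * k + 3) := by
      zify [hk1, hk2]
      nlinarith
    have h1 : 1 ≤ 2 * k := by omega
    zify [hk1, hk2, hle, h1]
    ring
  · rintro t ⟨a, b, ha1, haN, hb1, hbN, rfl⟩ hL hU
    zify [hk1, hk2] at hL hU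
    rcases le_total a b with hab | hab
    · exact gap_key k a b (by exact_mod_cast hk) (by exact_mod_cast ha1)
        (by exact_mod_cast haN) (by exact_mod_cast hb1) (by exact_mod_cast hbN)
        (by exact_mod_cast hab) hL hU
    · rw [mul_comm] at hL hU
      exact gap_key k b a (by exact_mod_cast hk) (by exact_mod_cast hb1)
        (by exact_mod_cast hbN) (by exact_mod_cast ha1) (by exact_mod_cast haN)
        (by exact_mod_cast hab) hL hU
end

section
/- Let k ≥ 2 and N = k² + k. Then k²(k²+1) and (k²+k)(k²−k+2) are both elements of the N×N multiplication table, their difference equals 2k, and no element of the N×N multiplication table lies strictly between them. -/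
lemma aux_gap (k a b : ℕ) (hk : 2 ≤ k) (hab : a ≤ b) (hbN : b ≤ k ^ 2 + k)
    (h1 : k ^ 2 * (k ^ 2 + 1) < a * b) (h2 : a * b < k ^ 2 * (k ^ 2 + 1) + 2 * k) : False := by
  -- a ≤ k^2
  have ha_le : a ≤ k ^ 2 := by
    by_contra h
    push_neg at h
    have : (k ^ 2 + 1) * (k ^ 2 + 1) ≤ a * b := Nat.mul_le_mul h (le_trans h hab)
    nlinarith
  -- a ≥ k^2 - k + 2, i.e. a + k ≥ k^2 + 2
  have ha_ge : k ^ 2 + 2 ≤ a + k := by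
    by_contra h
    push_neg at h
    have : a * b ≤ (k ^ 2 + 1 - k) * (k ^ 2 + k) := by
      apply Nat.mul_le_mul _ hbN
      omega
    have hkk : k ≤ k ^ 2 := by nlinarith
    have : (k ^ 2 + 1 - k) * (k ^ 2 + k) = k ^ 2 * k ^ 2 + k := by
      zify [Nat.le_succ_of_le hkk]
      ring
    nlinarith
  obtain ⟨i, hi⟩ : ∃ i, a + i = k ^ 2 := ⟨k ^ 2 - a, by omega⟩
  have h2i : i + 2 ≤ k := by omega
  obtain ⟨j, hj⟩ : ∃ j, k = i + 2 + j := ⟨k - (i + 2), by omega⟩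
  rcases le_or_gt b (k ^ 2 + 1 + i) with hb | hb
  · have : a * b ≤ a * (a + 2 * i + 1) := by
      apply Nat.mul_le_mul_left
      omega
    nlinarith
  · have : a * (a + 2 * i + 2) ≤ a * b := by
      apply Nat.mul_le_mul_left
      omega
    nlinarith [hj, hi, sq_nonneg j]

theorem gap_R_case_pronic (k N : ℕ) (hk : 2 ≤ k) (hN : N = k ^ 2 + k) :
    k ^ 2 * (k ^ 2 + 1) ∈ multTable N ∧
    (k ^ 2 + k) * (k ^ 2 - k + 2) ∈ multTable N ∧
    (k ^ 2 + k) * (k ^ 2 - k + 2) - k ^ 2 * (k ^ 2 + 1) = 2 * k ∧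
    ∀ t ∈ multTable N, k ^ 2 * (k ^ 2 + 1) < t → t < (k ^ 2 + k) * (k ^ 2 - k + 2) → False := by
  subst hN
  have hkk : k ≤ k ^ 2 := by nlinarith
  have key : (k ^ 2 + k) * (k ^ 2 - k + 2) = k ^ 2 * (k ^ 2 + 1) + 2 * k := by
    zify [hkk]
    ring
  refine ⟨⟨k ^ 2, k ^ 2 + 1, by nlinarith, by omega, by omega, by omega, rfl⟩,
    ⟨k ^ 2 + k, k ^ 2 - k + 2, by omega, le_refl _, by omega, by omega, rfl⟩, ?_, ?_⟩
  · rw [key]; exact Nat.add_sub_cancel_left _ _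
  · rintro t ⟨a, b, ha1, haN, hb1, hbN, rfl⟩ h1 h2
    rw [key] at h2
    rcases le_total a b with h | h
    · exact aux_gap k a b hk h hbN h1 h2
    · rw [mul_comm a b] at h1 h2
      exact aux_gap k b a hk h haN h1 h2
end

section
/- Let N ≥ 2 and let R be the largest integer j with ⌊j²/4⌋ < N. Define T = R if N = k² or N = k²+k for some positive integer k; T = R−1 if N = k²−1 or N = k²+k−1 for some positive integer k; and T = R−2 otherwise. Then for every x with 0 ≤ x ≤ T and every y of the form N − ⌊j²/4⌋ with 1 ≤ j ≤ R−2, one has x < y. -/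
open Classical in
theorem small_gaps_below_big_gaps (N R T : ℕ) (hN : 2 ≤ N)
    (hR1 : R ^ 2 / 4 < N) (hR2 : ∀ j : ℕ, j ^ 2 / 4 < N → j ≤ R)
    (hT : T = if ∃ k : ℕ, 1 ≤ k ∧ (N = k ^ 2 ∨ N = k ^ 2 + k) then R
      else if ∃ k : ℕ, 1 ≤ k ∧ (N = k ^ 2 - 1 ∨ N = k ^ 2 + k - 1) then R - 1
      else R - 2) :
    ∀ x y : ℕ, x ≤ T → (∃ j : ℕ, 1 ≤ j ∧ j ≤ R - 2 ∧ y = N - j ^ 2 / 4) → x < y := by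
  rintro x y hx ⟨j, hj1, hj2, hy⟩
  have hR3 : 3 ≤ R := by omega
  have hAB : j ^ 2 / 4 ≤ (R - 2) ^ 2 / 4 :=
    Nat.div_le_div_right (Nat.pow_le_pow_left hj2 2)
  have hCB : R ^ 2 / 4 = (R - 2) ^ 2 / 4 + (R - 1) := by
    obtain ⟨m, rfl⟩ : ∃ m, R = m + 2 := ⟨R - 2, by omega⟩
    have h1 : (m + 2) ^ 2 = m ^ 2 + (m + 1) * 4 := by ring
    rw [h1, Nat.add_mul_div_right _ _ (by norm_num : (0:ℕ) < 4)]
    simp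
  by_cases h1 : ∃ k : ℕ, 1 ≤ k ∧ (N = k ^ 2 ∨ N = k ^ 2 + k)
  · have hTR : T = R := by rw [hT, if_pos h1]
    obtain ⟨k, hk, hNk⟩ := h1
    have hsq : (2 * k) ^ 2 / 4 = k ^ 2 := by
      have h : (2 * k) ^ 2 = k ^ 2 * 4 := by ring
      rw [h, Nat.mul_div_cancel _ (by norm_num : (0:ℕ) < 4)]
    have hC2 : R ^ 2 / 4 + 2 ≤ N := by
      rcases hNk with hNk | hNk
      · -- N = k^2, show R = 2k - 1, k ≥ 2
        have hk2 : 2 ≤ k := by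
          by_contra h
          have : k = 1 := by omega
          subst this; simp at hNk; omega
        obtain ⟨m, rfl⟩ : ∃ m, k = m + 1 := ⟨k - 1, by omega⟩
        have hodd : (2 * (m + 1) - 1) ^ 2 / 4 = (m + 1) ^ 2 - (m + 1) := by
          have h : (2 * (m + 1) - 1) ^ 2 = 1 + (m ^ 2 + m) * 4 := by
            have : 2 * (m + 1) - 1 = 2 * m + 1 := by omega
            rw [this]; ring
          have h2 : (m + 1) ^ 2 - (m + 1) = m ^ 2 + m := by
            have : (m + 1) ^ 2 = m ^ 2 + 2 * m + 1 := by ring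
            omega
          rw [h, h2, Nat.add_mul_div_right _ _ (by norm_num : (0:ℕ) < 4)]; norm_num
        have hle : 2 * (m + 1) - 1 ≤ R := by
          apply hR2
          rw [hodd, hNk]
          have : m + 1 ≤ (m + 1) ^ 2 := Nat.le_self_pow (by norm_num) _
          omega
        have hge : R ≤ 2 * (m + 1) - 1 := by
          by_contra h
          have h2 : (2 * (m + 1)) ^ 2 / 4 ≤ R ^ 2 / 4 :=
            Nat.div_le_div_right (Nat.pow_le_pow_left (by omega) 2)
          rw [hsq] at h2
          omega
        have hReq : R = 2 * (m + 1) - 1 := le_antisymm hge hle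
        rw [hReq, hodd, hNk]
        have : (m + 1) ^ 2 = m ^ 2 + 2 * m + 1 := by ring
        omega
      · -- N = k^2 + k, show R = 2k
        have hle : 2 * k ≤ R := by
          apply hR2
          rw [hsq, hNk]; omega
        have hge : R ≤ 2 * k := by
          by_contra h
          have h2 : (2 * k + 1) ^ 2 / 4 ≤ R ^ 2 / 4 :=
            Nat.div_le_div_right (Nat.pow_le_pow_left (by omega) 2)
          have hodd : (2 * k + 1) ^ 2 / 4 = k ^ 2 + k := by
            have hh : (2 * k + 1) ^ 2 = 1 + (k ^ 2 + k) * 4 := by ring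
            rw [hh, Nat.add_mul_div_right _ _ (by norm_num : (0:ℕ) < 4)]; norm_num
          rw [hodd] at h2
          omega
        have hReq : R = 2 * k := le_antisymm hge hle
        have hk2 : 2 ≤ k := by omega
        rw [hReq, hsq, hNk]; omega
    omega
  · have hTR : T ≤ R - 1 := by
      rw [hT, if_neg h1]
      split <;> omega
    omega
end

section
/- Let N ≥ 8 and let R be the largest integer j with ⌊j²/4⌋ < N. Then N(N−R+1) and (N−1)(N−R+2) are elements of the N×N multiplication table, their difference equals R−2, and no element of the N×N multiplication table lies strictly between them. In particular, R−2 is a primitive gap of the table. -/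
lemma key_int (n r A B : ℤ) (hn : 8 ≤ n) (hr0 : 0 ≤ r) (hr : r ^ 2 < 4 * n)
    (hA1 : 1 ≤ A) (hA2 : A ≤ n) (hB1 : 1 ≤ B) (hB2 : B ≤ n)
    (hlo : n * (n - r + 1) < A * B) (hhi : A * B < (n - 1) * (n - r + 2)) : False := by
  have hrn : r < n := by nlinarith
  have hAx : n - r + 2 ≤ A := by nlinarith [mul_le_mul_of_nonneg_left hB2 (by linarith : (0:ℤ) ≤ A)]
  have hBx : n - r + 2 ≤ B := by nlinarith [mul_le_mul_of_nonneg_left hA2 (by linarith : (0:ℤ) ≤ B)]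
  set x := n - A with hx
  set y := n - B with hy
  have hx0 : 0 ≤ x := by omega
  have hy0 : 0 ≤ y := by omega
  have hx2 : x ≤ r - 2 := by omega
  have hy2 : y ≤ r - 2 := by omega
  have hAB : A * B = n ^ 2 - n * (x + y) + x * y := by rw [hx, hy]; ring
  rcases lt_trichotomy (x + y) (r - 1) with hs | hs | hs
  · -- s ≤ r - 2
    nlinarith [mul_nonneg hx0 hy0, mul_nonneg (by linarith : (0:ℤ) ≤ n) (by omega : 0 ≤ r - 2 - (x + y))]
  · -- s = r - 1
    have hxy1 : 0 < x * y := by nlinarith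
    have hx1 : 1 ≤ x := by
      rcases hx0.lt_or_eq with h | h
      · omega
      · rw [← h] at hxy1; simp at hxy1
    have hy1 : 1 ≤ y := by
      rcases hy0.lt_or_eq with h | h
      · omega
      · rw [← h] at hxy1; simp at hxy1
    nlinarith [mul_nonneg (by linarith : (0:ℤ) ≤ x - 1) (by linarith : (0:ℤ) ≤ y - 1)]
  · -- s ≥ r
    have hk0 : 0 ≤ x + y - r := by omega
    have hk2 : x + y - r ≤ r - 4 := by omega
    have h1 : 4 * (x * y) ≤ (x + y) ^ 2 := by nlinarith [sq_nonneg (x - y)]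
    have h2 : (x + y) ^ 2 ≤ r ^ 2 * (x + y - r + 1) := by
      have hq : r ^ 2 * (x + y - r + 1) - (x + y) ^ 2 = (x + y - r) * (r ^ 2 - 2 * r - (x + y - r)) := by
        ring
      have hp : (0:ℤ) ≤ r ^ 2 - 2 * r - (x + y - r) := by nlinarith [sq_nonneg (r - 2)]
      linarith [mul_nonneg hk0 hp, hq]
    have h3 : r ^ 2 * (x + y - r + 1) < 4 * n * (x + y - r + 1) := by
      have hq : 4 * n * (x + y - r + 1) - r ^ 2 * (x + y - r + 1)
          = (4 * n - r ^ 2) * (x + y - r + 1) := by ring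
      have := mul_pos (by linarith : (0:ℤ) < 4 * n - r ^ 2) (by omega : (0:ℤ) < x + y - r + 1)
      linarith
    rw [hAB] at hlo
    linarith

theorem gap_Rminus2 (N R : ℕ) (hN : 8 ≤ N)
    (hR1 : R ^ 2 / 4 < N) (hR2 : ∀ j : ℕ, j ^ 2 / 4 < N → j ≤ R) :
    N * (N - (R - 1)) ∈ multTable N ∧
    (N - 1) * (N - (R - 2)) ∈ multTable N ∧
    (N - 1) * (N - (R - 2)) - N * (N - (R - 1)) = R - 2 ∧
    ∀ t ∈ multTable N, N * (N - (R - 1)) < t → t < (N - 1) * (N - (R - 2)) → False := by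
  have hr4 : R ^ 2 < 4 * N := by
    rwa [Nat.div_lt_iff_lt_mul (by norm_num), mul_comm] at hR1
  have hR5 : 5 ≤ R := hR2 5 (by omega)
  have hRN : R < N := by nlinarith
  refine ⟨⟨N, N - (R - 1), by omega, le_refl _, by omega, by omega, rfl⟩,
    ⟨N - 1, N - (R - 2), by omega, by omega, by omega, by omega, rfl⟩, ?_, ?_⟩
  · have ha : N - (R - 2) = (N - (R - 1)) + 1 := by omega
    rw [ha]
    have key : (N - 1) * ((N - (R - 1)) + 1) = (R - 2) + N * (N - (R - 1)) := by
      zify [(by omega : R - 1 ≤ N), (by omega : 1 ≤ R), (by omega : 2 ≤ R), (by omega : 1 ≤ N)]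
      ring
    rw [key, Nat.add_sub_cancel]
  · rintro t ⟨a, b, ha1, ha2, hb1, hb2, rfl⟩ h1 h2
    have c1 : ((N : ℤ)) * ((N : ℤ) - (R : ℤ) + 1) < (a : ℤ) * b := by
      zify [(by omega : R - 1 ≤ N), (by omega : 1 ≤ R)] at h1
      linarith
    have c2 : ((a : ℤ)) * b < ((N : ℤ) - 1) * ((N : ℤ) - (R : ℤ) + 2) := by
      zify [(by omega : R - 2 ≤ N), (by omega : 2 ≤ R), (by omega : 1 ≤ N)] at h2
      linarith
    exact key_int N R a b (by exact_mod_cast hN) (by positivity)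
      (by exact_mod_cast hr4) (by exact_mod_cast ha1) (by exact_mod_cast ha2)
      (by exact_mod_cast hb1) (by exact_mod_cast hb2) c1 c2
end
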